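/- Let B be a d×d positive definite real matrix and C a d×d positive semidefinite real matrix, and set A = B + C. Then for every nonzero x ∈ ℝ^d, (xᵀ A x)/(xᵀ B x) ≤ det(A)/det(B); in particular, sup_{x ≠ 0} (xᵀ A x)/(xᵀ B x) ≤ det(A)/det(B). -/

import Mathlib

open Matrix

section Aux

variable {d : ℕ}

/-- If `M` is a real symmetric matrix with `M - 1` positive semidefinite, then
`yᵀ M y ≤ det M * (yᵀ y)` for every `y`. -/
lemma aux_quad_le_det {M : Matrix (Fin d) (Fin d) ℝ} (hM : M.IsHermitian)
    (hM1 : (M - 1).PosSemidef) (y : Fin d → ℝ) :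
    y ⬝ᵥ M *ᵥ y ≤ M.det * (y ⬝ᵥ y) := by
  -- eigenvalues are ≥ 1
  have hev : ∀ i, 1 ≤ hM.eigenvalues i := by
    intro i
    have h1 := hM1.re_dotProduct_nonneg (⇑(hM.eigenvectorBasis i))
    have h2 := hM.eigenvalues_eq i
    have hnorm : (star ⇑(hM.eigenvectorBasis i)) ⬝ᵥ ⇑(hM.eigenvectorBasis i) = 1 := by
      have := hM.eigenvectorBasis.orthonormal.1 i
      have h := (EuclideanSpace.inner_eq_star_dotProduct (hM.eigenvectorBasis i)
        (hM.eigenvectorBasis i)).symm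
      rw [dotProduct_comm] at h
      rw [h, real_inner_self_eq_norm_sq, this]; norm_num
    simp only [RCLike.re_to_real] at h1 h2
    rw [sub_mulVec, dotProduct_sub, one_mulVec, hnorm, ← h2] at h1
    linarith
  -- spectral decomposition
  set U : Matrix (Fin d) (Fin d) ℝ := (hM.eigenvectorUnitary : Matrix (Fin d) (Fin d) ℝ)
  set z : Fin d → ℝ := star U *ᵥ y with hz
  have hUU : U * star U = 1 := Matrix.mem_unitaryGroup_iff.mp hM.eigenvectorUnitary.2
  have hquad : y ⬝ᵥ M *ᵥ y = ∑ i, hM.eigenvalues i * (z i * z i) := by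
    conv_lhs => rw [hM.spectral_theorem, Unitary.conjStarAlgAut_apply]
    have : (U * diagonal (RCLike.ofReal ∘ hM.eigenvalues) * star U) *ᵥ y
        = U *ᵥ (diagonal (RCLike.ofReal ∘ hM.eigenvalues) *ᵥ z) := by
      rw [hz, ← mulVec_mulVec, ← mulVec_mulVec]
    have hyU : y ᵥ* U = z := by
      rw [hz, ← mulVec_transpose]
      congr 1
    rw [this, dotProduct_mulVec y U, hyU]
    simp only [dotProduct, mulVec_diagonal, Function.comp_apply, RCLike.ofReal_real_eq_id, id]
    exact Finset.sum_congr rfl fun i _ => by ring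
  have hnorm : y ⬝ᵥ y = ∑ i, z i * z i := by
    have hyU : y ᵥ* U = z := by
      rw [hz, ← mulVec_transpose]
      congr 1
    have : z ⬝ᵥ z = y ⬝ᵥ ((U * star U) *ᵥ y) := by
      rw [← mulVec_mulVec, dotProduct_mulVec y U, hyU, hz]
    rw [hUU] at this
    simp only [one_mulVec] at this
    rw [← this]
    rfl
  have hdet : M.det = ∏ i, hM.eigenvalues i := by
    simpa using hM.det_eq_prod_eigenvalues
  rw [hquad, hnorm, hdet, Finset.mul_sum]
  apply Finset.sum_le_sum
  intro i _
  have hsq : 0 ≤ z i * z i := mul_self_nonneg _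
  apply mul_le_mul_of_nonneg_right _ hsq
  -- λ i ≤ ∏ λ
  calc hM.eigenvalues i = hM.eigenvalues i * 1 := (mul_one _).symm
    _ ≤ hM.eigenvalues i * ∏ j ∈ Finset.univ.erase i, hM.eigenvalues j := by
        apply mul_le_mul_of_nonneg_left _ (le_trans zero_le_one (hev i))
        calc (1:ℝ) = ∏ _j ∈ Finset.univ.erase i, (1:ℝ) := by simp
          _ ≤ _ := Finset.prod_le_prod (by intros; norm_num) (fun j _ => hev j)
    _ = ∏ j, hM.eigenvalues j := Finset.mul_prod_erase _ _ (Finset.mem_univ i)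

end Aux

/-- Lemma 12 in Abbasi-Yadkori et al.: if `A = B + C` with `B ≻ 0` and `C ⪰ 0`, then
`(xᵀAx)/(xᵀBx) ≤ det(A)/det(B)` for all `x ≠ 0`; in particular the supremum over
nonzero `x` is bounded by `det(A)/det(B)`. -/
theorem stmt3 {d : ℕ} (B C A : Matrix (Fin d) (Fin d) ℝ)
    (hB : B.PosDef) (hC : C.PosSemidef) (hA : A = B + C) :
    (∀ x : Fin d → ℝ, x ≠ 0 → (x ⬝ᵥ A *ᵥ x) / (x ⬝ᵥ B *ᵥ x) ≤ A.det / B.det) ∧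
      (⨆ x : {x : Fin d → ℝ // x ≠ 0},
          ((x : Fin d → ℝ) ⬝ᵥ A *ᵥ (x : Fin d → ℝ)) /
            ((x : Fin d → ℝ) ⬝ᵥ B *ᵥ (x : Fin d → ℝ))) ≤ A.det / B.det := by
  have hBps := hB.posSemidef
  set S := (open scoped MatrixOrder in CFC.sqrt B) with hSdef
  have hSps : S.PosSemidef := by
    open scoped MatrixOrder in exact Matrix.nonneg_iff_posSemidef.mp (CFC.sqrt_nonneg B)
  have hSS : S * S = B := by
    open scoped MatrixOrder in exact CFC.sqrt_mul_sqrt_self B (Matrix.nonneg_iff_posSemidef.mpr hBps)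
  have hdetS : S.det * S.det = B.det := by rw [← det_mul, hSS]
  have hdetB : 0 < B.det := hB.det_pos
  have hdetSne : S.det ≠ 0 := by
    intro h
    rw [h, mul_zero] at hdetS
    exact absurd hdetS.symm (ne_of_gt hdetB)
  have hSunit : IsUnit S.det := isUnit_iff_ne_zero.mpr hdetSne
  have hSinv : S⁻¹ * S = 1 := nonsing_inv_mul S hSunit
  have hSinv' : S * S⁻¹ = 1 := mul_nonsing_inv S hSunit
  have hSinvH : S⁻¹.IsHermitian := hSps.1.inv
  set M := S⁻¹ * A * S⁻¹ with hMdef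
  have hAH : A.IsHermitian := by rw [hA]; exact hB.1.add hC.1
  have hMH : M.IsHermitian := by
    rw [Matrix.IsHermitian, hMdef, conjTranspose_mul, conjTranspose_mul, hSinvH.eq, hAH.eq,
      mul_assoc]
  have hBid : S⁻¹ * B * S⁻¹ = 1 := by
    rw [← hSS, ← mul_assoc, hSinv, one_mul, hSinv']
  have hM1 : M - 1 = S⁻¹ * C * S⁻¹ := by
    rw [hMdef, hA, mul_add, add_mul, hBid, add_sub_cancel_left]
  have hM1ps : (M - 1).PosSemidef := by
    rw [hM1]
    have := hC.mul_mul_conjTranspose_same S⁻¹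
    rwa [hSinvH.eq] at this
  have hASMS : S * M * S = A := by
    have h1 : S * (S⁻¹ * A * S⁻¹) * S = (S * S⁻¹) * (A * (S⁻¹ * S)) := by
      simp only [Matrix.mul_assoc]
    rw [hMdef, h1, hSinv', hSinv, one_mul, mul_one]
  have hdetM : M.det = A.det / B.det := by
    rw [hMdef, det_mul, det_mul, det_nonsing_inv, Ring.inverse_eq_inv', ← hdetS]
    field_simp
  have key : ∀ x : Fin d → ℝ, x ⬝ᵥ A *ᵥ x ≤ (A.det / B.det) * (x ⬝ᵥ B *ᵥ x) := by
    intro x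
    set y := S *ᵥ x with hy
    have hxS : x ᵥ* S = y := by
      have hT : Sᵀ = S := hSps.1
      rw [hy, ← mulVec_transpose, hT]
    have hxA : x ⬝ᵥ A *ᵥ x = y ⬝ᵥ M *ᵥ y := by
      conv_lhs => rw [← hASMS]
      rw [← mulVec_mulVec, ← mulVec_mulVec, dotProduct_mulVec, hxS, hy]
    have hxB : x ⬝ᵥ B *ᵥ x = y ⬝ᵥ y := by
      conv_lhs => rw [← hSS]
      rw [← mulVec_mulVec, dotProduct_mulVec, hxS, hy]
    rw [hxA, hxB, ← hdetM]
    exact aux_quad_le_det hMH hM1ps y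
  have hApd : A.PosDef := hA ▸ hB.add_posSemidef hC
  have hratio_nonneg : (0:ℝ) ≤ A.det / B.det :=
    le_of_lt (div_pos hApd.det_pos hdetB)
  have part1 : ∀ x : Fin d → ℝ, x ≠ 0 → (x ⬝ᵥ A *ᵥ x) / (x ⬝ᵥ B *ᵥ x) ≤ A.det / B.det := by
    intro x hx
    have hpos : 0 < x ⬝ᵥ B *ᵥ x := by
      have := hB.re_dotProduct_pos hx
      simpa using this
    rw [div_le_iff₀ hpos]
    exact key x
  exact ⟨part1, Real.iSup_le (fun x => part1 x.1 x.2) hratio_nonneg⟩
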